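/- Let p ∈ ℝ[x_1,...,x_n] be a real zero polynomial. Then the Euclidean closure of the connected component of the origin in {a ∈ ℝ^n : p(a) ≠ 0} equals the set {a ∈ ℝ^n : p(λa) ≠ 0 for all λ ∈ [0,1)}. -/

import Mathlib

open Polynomial Set


lemma lemA (q : Polynomial ℂ) (h0 : q.eval 0 ≠ 0)
    (hroots : ∀ r ∈ q.roots, r.im = 0 ∧ (r.re < 0 ∨ 1 ≤ r.re)) (t : ℝ) (ht : t ∈ Set.Ico (0:ℝ) 1) :
    (1 - t) ^ q.natDegree * ‖q.eval 0‖ ≤ ‖q.eval (t : ℂ)‖ := by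
  obtain ⟨ht0, ht1⟩ := ht
  have hq : q ≠ 0 := fun h => h0 (by simp [h])
  have hcard : q.roots.card = q.natDegree :=
    (Polynomial.splits_iff_card_roots).1 (IsAlgClosed.splits q)
  have hfac := Polynomial.C_leadingCoeff_mul_prod_multiset_X_sub_C hcard
  -- abs of eval at z
  have habs : ∀ z : ℂ, ‖q.eval z‖
      = ‖q.leadingCoeff‖ * (q.roots.map (fun r => ‖z - r‖)).prod := by
    intro z
    conv_lhs => rw [← hfac]
    rw [eval_mul, eval_C, norm_mul]
    congr 1
    rw [eval_multiset_prod, Multiset.map_map, ← normHom_apply, map_multiset_prod, Multiset.map_map]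
    simp
  rw [habs, habs]
  rw [mul_left_comm]
  apply mul_le_mul_of_nonneg_left _ (norm_nonneg _)
  -- key multiset inequality
  have hconst : ((1:ℝ) - t) ^ q.natDegree = (q.roots.map (fun _ => (1 - t : ℝ))).prod := by
    simp [Multiset.map_const', Multiset.prod_replicate, hcard]
  calc ((1:ℝ) - t) ^ q.natDegree * (q.roots.map (fun r => ‖(0:ℂ) - r‖)).prod
      = (q.roots.map (fun r => (1 - t) * ‖(0:ℂ) - r‖)).prod := by
        rw [hconst, ← Multiset.prod_map_mul]
    _ ≤ (q.roots.map (fun r => ‖(t:ℂ) - r‖)).prod := by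
        apply Multiset.prod_map_le_prod_map₀
        · intro r hr
          exact mul_nonneg (by linarith) (norm_nonneg _)
        · intro r hr
          obtain ⟨him, hre⟩ := hroots r hr
          have hr' : r = (r.re : ℂ) := Complex.ext rfl (by simp [him])
          rw [hr']
          rw [show (0:ℂ) - (r.re:ℂ) = ((0 - r.re : ℝ) : ℂ) by push_cast; ring,
            show (t:ℂ) - (r.re:ℂ) = ((t - r.re : ℝ) : ℂ) by push_cast; ring,
            Complex.norm_real, Complex.norm_real, Real.norm_eq_abs, Real.norm_eq_abs]
          rcases hre with h | h
          · rw [abs_of_nonneg (by linarith : (0:ℝ) ≤ 0 - r.re), abs_of_nonneg (by linarith : (0:ℝ) ≤ t - r.re)]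
            nlinarith
          · rw [abs_of_nonpos (by linarith : (0:ℝ) - r.re ≤ 0), abs_of_nonpos (by linarith : t - r.re ≤ 0)]
            nlinarith


noncomputable def Q (n : ℕ) (p : MvPolynomial (Fin n) ℝ) (b : Fin n → ℝ) : Polynomial ℂ :=
  MvPolynomial.aeval (fun i => Polynomial.C (b i : ℂ) * Polynomial.X) p

lemma L1 (n : ℕ) (p : MvPolynomial (Fin n) ℝ) (b : Fin n → ℝ) (z : ℂ) :
    (Q n p b).eval z
      = MvPolynomial.eval (fun i => z * (b i : ℂ)) (MvPolynomial.map (algebraMap ℝ ℂ) p) := by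
  have h := MvPolynomial.comp_aeval_apply
    (R := ℝ) (φ := (Polynomial.aeval z).restrictScalars ℝ)
    (f := fun i : Fin n => Polynomial.C (b i : ℂ) * Polynomial.X) p
  have h1 : ((Polynomial.aeval z).restrictScalars ℝ) (Q n p b) = (Q n p b).eval z := by
    rw [AlgHom.restrictScalars_apply, Polynomial.coe_aeval_eq_eval]
  have h2 : (fun i : Fin n => (AlgHom.restrictScalars ℝ (Polynomial.aeval z)) (Polynomial.C (b i:ℂ) * Polynomial.X)) = fun i => z * (b i:ℂ) := by
    funext i
    simp only [AlgHom.coe_restrictScalars', AlgHom.coe_comp, Function.comp_apply, map_mul,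
      Polynomial.aeval_C, Polynomial.aeval_X, Algebra.algebraMap_self, RingHom.id_apply]
    ring
  rw [← h1, Q, h, h2, MvPolynomial.eval_map, ← MvPolynomial.aeval_def]

lemma L2 (n : ℕ) (p : MvPolynomial (Fin n) ℝ) (b : Fin n → ℝ) (t : ℝ) :
    (Q n p b).eval (t : ℂ) = ((MvPolynomial.eval (t • b) p : ℝ) : ℂ) := by
  rw [L1]
  induction p using MvPolynomial.induction_on with
  | C r => simp
  | add q r hq hr => simp [hq, hr]
  | mul_X q i hq =>
      simp only [map_mul, MvPolynomial.map_X, MvPolynomial.eval_mul, MvPolynomial.eval_X, hq,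
        Pi.smul_apply, smul_eq_mul]
      push_cast
      ring

lemma L3 (n : ℕ) (p : MvPolynomial (Fin n) ℝ) (b : Fin n → ℝ) :
    (Q n p b).natDegree ≤ p.totalDegree := by
  rw [Q]
  conv_lhs => rw [p.as_sum]
  rw [map_sum]
  apply Polynomial.natDegree_sum_le_of_forall_le
  intro v hv
  refine le_trans ?_ (MvPolynomial.le_totalDegree hv)
  rw [MvPolynomial.aeval_monomial]
  apply (Polynomial.natDegree_mul_le).trans
  have h1 : (algebraMap ℝ (Polynomial ℂ) (MvPolynomial.coeff v p)).natDegree = 0 := by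
    rw [IsScalarTower.algebraMap_eq ℝ ℂ (Polynomial ℂ)]
    simp [Polynomial.algebraMap_eq]
  rw [h1, zero_add]
  rw [Finsupp.prod]
  apply (Polynomial.natDegree_prod_le _ _).trans
  rw [Finsupp.sum]
  apply Finset.sum_le_sum
  intro i _
  apply (Polynomial.natDegree_pow_le).trans
  have : (Polynomial.C (b i : ℂ) * Polynomial.X).natDegree ≤ 1 := by
    apply (Polynomial.natDegree_mul_le).trans
    simp
  calc v i * (Polynomial.C (b i : ℂ) * Polynomial.X).natDegree ≤ v i * 1 :=
        Nat.mul_le_mul_left _ this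
    _ = v i := mul_one _




/-- Let `p ∈ ℝ[x_1,...,x_n]` be a real zero polynomial (for every `a ∈ ℝ^n` and `λ ∈ ℂ`,
`p(λa) = 0` implies `λ ∈ ℝ`). Then the Euclidean closure of the connected component of the
origin in `{a ∈ ℝ^n : p(a) ≠ 0}` equals `{a ∈ ℝ^n : p(λa) ≠ 0 for all λ ∈ [0,1)}`. -/
theorem stmt9 (n : ℕ) (p : MvPolynomial (Fin n) ℝ)
    (hRZ : ∀ a : Fin n → ℝ, ∀ z : ℂ,
      MvPolynomial.eval (fun i => z * (a i : ℂ)) (MvPolynomial.map (algebraMap ℝ ℂ) p) = 0 →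
      z.im = 0) :
    closure (connectedComponentIn {a : Fin n → ℝ | MvPolynomial.eval a p ≠ 0} 0) =
      {a : Fin n → ℝ | ∀ lam : ℝ, lam ∈ Set.Ico (0 : ℝ) 1 →
        MvPolynomial.eval (lam • a) p ≠ 0} := by
  set S : Set (Fin n → ℝ) := {a | MvPolynomial.eval a p ≠ 0} with hS
  set C : Set (Fin n → ℝ) := connectedComponentIn S 0 with hC
  set R : Set (Fin n → ℝ) := {a | ∀ lam : ℝ, lam ∈ Set.Ico (0 : ℝ) 1 →
      MvPolynomial.eval (lam • a) p ≠ 0} with hR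
  set D : ℕ := p.totalDegree with hD
  -- p(0) ≠ 0
  have hp0 : MvPolynomial.eval (0 : Fin n → ℝ) p ≠ 0 := by
    intro h
    have e1 : (Q n p 0).eval ((0:ℝ):ℂ) = ((MvPolynomial.eval ((0:ℝ) • (0 : Fin n → ℝ)) p : ℝ) : ℂ) := L2 n p 0 0
    rw [zero_smul, h] at e1
    have e2 : MvPolynomial.eval (fun i => Complex.I * (((0 : Fin n → ℝ)) i : ℂ))
        (MvPolynomial.map (algebraMap ℝ ℂ) p) = 0 := by
      have e3 := L1 n p 0 ((0:ℝ):ℂ)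
      have e4 : (fun i : Fin n => Complex.I * (((0 : Fin n → ℝ)) i : ℂ))
          = (fun i : Fin n => ((0:ℝ):ℂ) * (((0 : Fin n → ℝ)) i : ℂ)) := by
        funext i; simp
      rw [e4, ← e3, e1]
      simp
    have := hRZ 0 Complex.I e2
    simp [Complex.I_im] at this
  -- key lower bound on R
  have keyL : ∀ b ∈ R, ∀ t ∈ Set.Ico (0:ℝ) 1,
      (1 - t) ^ D * |MvPolynomial.eval (0 : Fin n → ℝ) p|
        ≤ |MvPolynomial.eval (t • b) p| := by
    intro b hb t ht
    have hq0 : (Q n p b).eval 0 ≠ 0 := by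
      rw [show (0:ℂ) = ((0:ℝ):ℂ) by norm_num, L2]
      rw [zero_smul]
      exact_mod_cast fun h => hp0 (by exact_mod_cast h)
    have hroots : ∀ r ∈ (Q n p b).roots, r.im = 0 ∧ (r.re < 0 ∨ 1 ≤ r.re) := by
      intro r hr
      have hqne : Q n p b ≠ 0 := fun h => hq0 (by simp [h])
      have hev : (Q n p b).eval r = 0 := (Polynomial.isRoot_of_mem_roots hr)
      have him : r.im = 0 := hRZ b r (by rw [← L1]; exact hev)
      refine ⟨him, ?_⟩
      by_contra hcon
      push_neg at hcon
      obtain ⟨h1, h2⟩ := hcon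
      have hrre : r = ((r.re : ℝ) : ℂ) := Complex.ext rfl (by simp [him])
      have : MvPolynomial.eval (r.re • b) p = 0 := by
        have := hev
        rw [hrre, L2] at this
        exact_mod_cast this
      exact hb r.re ⟨h1, h2⟩ this
    have hA := lemA (Q n p b) hq0 hroots t ht
    have e5 : ‖(Q n p b).eval (t:ℂ)‖ = |MvPolynomial.eval (t • b) p| := by
      rw [L2, Complex.norm_real, Real.norm_eq_abs]
    have e6 : ‖(Q n p b).eval 0‖ = |MvPolynomial.eval (0 : Fin n → ℝ) p| := by
      rw [show (0:ℂ) = ((0:ℝ):ℂ) by norm_num, L2, zero_smul, Complex.norm_real, Real.norm_eq_abs]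
    rw [e5, e6] at hA
    refine le_trans ?_ hA
    apply mul_le_mul_of_nonneg_right _ (abs_nonneg _)
    apply pow_le_pow_of_le_one (by linarith [ht.1, ht.2]) (by linarith [ht.1]) (L3 n p b)
  -- R is closed
  have hRclosed : IsClosed R := by
    have hReq : R = ⋂ t ∈ Set.Ico (0:ℝ) 1,
        {a : Fin n → ℝ | (1 - t) ^ D * |MvPolynomial.eval (0 : Fin n → ℝ) p|
          ≤ |MvPolynomial.eval (t • a) p|} := by
      apply Set.Subset.antisymm
      · intro a ha
        simp only [Set.mem_iInter]
        intro t ht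
        exact keyL a ha t ht
      · intro a ha
        intro t ht h
        have := Set.mem_iInter.1 (Set.mem_iInter.1 ha t) ht
        simp only [Set.mem_setOf_eq] at this
        rw [h, abs_zero] at this
        have h1 : (0:ℝ) < (1 - t) ^ D := pow_pos (by linarith [ht.2]) D
        have h2 : (0:ℝ) < |MvPolynomial.eval (0 : Fin n → ℝ) p| := abs_pos.2 hp0
        nlinarith
    rw [hReq]
    apply isClosed_biInter
    intro t ht
    apply isClosed_le continuous_const
    exact (MvPolynomial.continuous_eval p).comp (continuous_id.const_smul t : Continuous fun a : Fin n → ℝ => t • a) |>.abs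
  -- openness of the Icc-version
  have hcont2 : Continuous (fun z : (Fin n → ℝ) × ℝ => MvPolynomial.eval (z.2 • z.1) p) :=
    (MvPolynomial.continuous_eval p).comp (continuous_snd.smul continuous_fst)
  set U : Set (Fin n → ℝ) := {b | ∀ t ∈ Set.Icc (0:ℝ) 1, MvPolynomial.eval (t • b) p ≠ 0} with hU
  have hUopen : IsOpen U := by
    rw [isOpen_iff_mem_nhds]
    intro b₀ hb₀
    have := (isCompact_Icc (a := (0:ℝ)) (b := 1)).eventually_forall_of_forall_eventually
      (x₀ := b₀) (P := fun b t => MvPolynomial.eval (t • b) p ≠ 0) ?_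
    · exact this.mono fun b h => h
    · intro t ht
      have hopen : IsOpen {z : (Fin n → ℝ) × ℝ | MvPolynomial.eval (z.2 • z.1) p ≠ 0} :=
        isOpen_compl_singleton.preimage hcont2
      exact hopen.mem_nhds (hb₀ t ht)
  have hUR : U ⊆ R := fun b hb t ht => hb t ⟨ht.1, le_of_lt ht.2⟩
  have h0S : (0 : Fin n → ℝ) ∈ S := hp0
  have h0C : (0 : Fin n → ℝ) ∈ C := mem_connectedComponentIn h0S
  -- C ⊆ U
  have hCU : C ⊆ U := by
    have hpre : IsPreconnected C := isPreconnected_connectedComponentIn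
    have hsub : C ⊆ U ∪ Rᶜ := by
      intro b hb
      by_cases hbR : b ∈ R
      · left
        intro t ht
        rcases eq_or_lt_of_le ht.2 with h1 | h1
        · have hbS : b ∈ S := connectedComponentIn_subset S 0 hb
          rw [h1, one_smul]
          exact hbS
        · exact hbR t ⟨ht.1, h1⟩
      · right; exact hbR
    have hdisj : Disjoint U Rᶜ := Set.disjoint_compl_right_iff_subset.2 hUR
    have h0U : (0 : Fin n → ℝ) ∈ U := by
      intro t ht
      rw [smul_zero]
      exact hp0
    exact hpre.subset_left_of_subset_union hUopen hRclosed.isOpen_compl hdisj hsub ⟨0, h0C, h0U⟩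
  apply Set.Subset.antisymm
  · -- closure C ⊆ R
    rw [← hRclosed.closure_eq]
    exact closure_mono (hCU.trans hUR)
  · -- R ⊆ closure C
    intro a ha
    have hsC : ∀ s ∈ Set.Ico (0:ℝ) 1, s • a ∈ C := by
      intro s hs
      set M : Set (Fin n → ℝ) := (fun t : ℝ => t • a) '' Set.Icc 0 s with hM
      have hMpre : IsPreconnected M :=
        (isPreconnected_Icc).image _ ((continuous_id.smul continuous_const).continuousOn)
      have h0M : (0 : Fin n → ℝ) ∈ M := ⟨0, ⟨le_refl 0, hs.1⟩, by simp⟩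
      have hMS : M ⊆ S := by
        rintro _ ⟨t, ht, rfl⟩
        exact ha t ⟨ht.1, lt_of_le_of_lt ht.2 hs.2⟩
      have := hMpre.subset_connectedComponentIn h0M hMS
      exact this ⟨s, ⟨hs.1, le_refl s⟩, rfl⟩
    have htend : Filter.Tendsto (fun k : ℕ => (1 - 1/(k+1:ℝ)) • a) Filter.atTop (nhds a) := by
      have h1 : Filter.Tendsto (fun k : ℕ => (1 - 1/(k+1:ℝ))) Filter.atTop (nhds 1) := by
        have := tendsto_one_div_add_atTop_nhds_zero_nat (𝕜 := ℝ)
        have h2 := Filter.Tendsto.const_sub (1:ℝ) this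
        simpa using h2
      have := h1.smul_const a
      simpa using this
    apply mem_closure_of_tendsto htend
    apply Filter.Eventually.of_forall
    intro k
    apply hsC
    constructor
    · have h3 : 1/(k+1:ℝ) ≤ 1 := by
        rw [div_le_one (by positivity)]
        linarith [Nat.cast_nonneg (α := ℝ) k]
      linarith
    · have h4 : 0 < 1/(k+1:ℝ) := by positivity
      linarith
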